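/- Let A be an n×n Hermitian matrix (n ≥ 2) with non-scalar entries so that B = A − (tr A / n)·I ≠ 0. Then λ_min(A) ≤ tr A/n − ((n²−3n+3)/(n³(n−1)³))^{1/4} · tr(B²)/(tr B⁴)^{1/4} and λ_max(A) ≥ tr A/n + ((n²−3n+3)/(n³(n−1)³))^{1/4} · tr(B²)/(tr B⁴)^{1/4}. -/

import Mathlib

open Finset in
private lemma aux_cs4 {ι : Type*} (s : Finset ι) (f : ι → ℝ) :
    (∑ i ∈ s, f i) ^ 4 ≤ (s.card : ℝ) ^ 3 * ∑ i ∈ s, (f i) ^ 4 := by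
  have h1 : (∑ i ∈ s, f i) ^ 2 ≤ (∑ i ∈ s, (f i) ^ 2) * (s.card : ℝ) := by
    simpa using Finset.sum_mul_sq_le_sq_mul_sq s f (fun _ => 1)
  have h2 : (∑ i ∈ s, (f i) ^ 2) ^ 2 ≤ (∑ i ∈ s, (f i) ^ 4) * (s.card : ℝ) := by
    have := Finset.sum_mul_sq_le_sq_mul_sq s (fun i => (f i) ^ 2) (fun _ => 1)
    simpa [← pow_mul] using this
  have hs2 : (0 : ℝ) ≤ ∑ i ∈ s, (f i) ^ 2 := Finset.sum_nonneg fun i _ => by positivity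
  have hc : (0 : ℝ) ≤ (s.card : ℝ) := by positivity
  calc (∑ i ∈ s, f i) ^ 4 = ((∑ i ∈ s, f i) ^ 2) ^ 2 := by ring
    _ ≤ ((∑ i ∈ s, (f i) ^ 2) * (s.card : ℝ)) ^ 2 := by
        exact pow_le_pow_left₀ (sq_nonneg _) h1 2
    _ = (∑ i ∈ s, (f i) ^ 2) ^ 2 * (s.card : ℝ) ^ 2 := by ring
    _ ≤ ((∑ i ∈ s, (f i) ^ 4) * (s.card : ℝ)) * (s.card : ℝ) ^ 2 := by
        exact mul_le_mul_of_nonneg_right h2 (by positivity)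
    _ = (s.card : ℝ) ^ 3 * ∑ i ∈ s, (f i) ^ 4 := by ring

open Finset in
private lemma aux_core {n : ℕ} (hn : 2 ≤ n) (d : Fin n → ℝ) (hsum : ∑ i, d i = 0)
    (hne : ∃ i, d i ≠ 0) (i0 : Fin n) (hmax : ∀ i, d i ≤ d i0) :
    ((n : ℝ) ^ 2 - 3 * n + 3) / ((n : ℝ) ^ 3 * ((n : ℝ) - 1) ^ 3) * (∑ i, (d i) ^ 2) ^ 4
      ≤ (d i0) ^ 4 * ∑ i, (d i) ^ 4 := by
  have hN : (2 : ℝ) ≤ (n : ℝ) := by exact_mod_cast hn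
  obtain ⟨j0, -, hj0⟩ := Finset.exists_min_image Finset.univ d ⟨i0, Finset.mem_univ i0⟩
  have hj0' : ∀ i, d j0 ≤ d i := fun i => hj0 i (Finset.mem_univ i)
  set m := d i0 with hm_def
  set M := -d j0 with hM_def
  -- m > 0
  have hmpos : 0 < m := by
    rcases lt_or_ge 0 m with h | h
    · exact h
    · exfalso
      obtain ⟨k, hk⟩ := hne
      have : ∀ i ∈ Finset.univ, d i ≤ 0 := fun i _ => le_trans (hmax i) h
      have := (Finset.sum_eq_zero_iff_of_nonpos this).mp hsum
      exact hk (this k (Finset.mem_univ k))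
  have hMpos : 0 < M := by
    rcases lt_or_ge 0 M with h | h
    · exact h
    · exfalso
      obtain ⟨k, hk⟩ := hne
      have h0 : 0 ≤ d j0 := by simp only [hM_def] at h; linarith
      have : ∀ i ∈ Finset.univ, 0 ≤ d i := fun i _ => le_trans h0 (hj0' i)
      have := (Finset.sum_eq_zero_iff_of_nonneg this).mp hsum
      exact hk (this k (Finset.mem_univ k))
  set S2 := ∑ i, (d i) ^ 2 with hS2_def
  set S4 := ∑ i, (d i) ^ 4 with hS4_def
  have hS2nn : 0 ≤ S2 := Finset.sum_nonneg fun i _ => by positivity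
  -- S2 ≤ n m M
  have hS2 : S2 ≤ (n : ℝ) * m * M := by
    have key : ∀ i, (d i) ^ 2 ≤ m * M + (m - M) * d i := by
      intro i
      have h1 := hmax i
      have h2 := hj0' i
      nlinarith [h1, h2]
    calc S2 ≤ ∑ i, (m * M + (m - M) * d i) := Finset.sum_le_sum fun i _ => key i
      _ = (n : ℝ) * m * M + (m - M) * ∑ i, d i := by
          have hms : ∑ i, (m - M) * d i = (m - M) * ∑ i, d i := (Finset.mul_sum _ _ _).symm
          rw [Finset.sum_add_distrib, hms, Finset.sum_const, Finset.card_univ,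
            Fintype.card_fin, nsmul_eq_mul]
          ring
      _ = (n : ℝ) * m * M := by rw [hsum]; ring
  -- erase j0
  have hj0mem : j0 ∈ (Finset.univ : Finset (Fin n)) := Finset.mem_univ j0
  have herase_sum : ∑ i ∈ Finset.univ.erase j0, d i = M := by
    have := Finset.sum_erase_add Finset.univ d hj0mem
    rw [hsum] at this
    simp only [hM_def]
    linarith
  have hcard : ((Finset.univ.erase j0).card : ℝ) = (n : ℝ) - 1 := by
    rw [Finset.card_erase_of_mem hj0mem, Finset.card_univ, Fintype.card_fin]
    have : 1 ≤ n := by omega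
    push_cast [Nat.cast_sub this]
    ring
  set T := ∑ i ∈ Finset.univ.erase j0, (d i) ^ 4 with hT_def
  have hTnn : 0 ≤ T := Finset.sum_nonneg fun i _ => by positivity
  have hHolder : M ^ 4 ≤ ((n : ℝ) - 1) ^ 3 * T := by
    have := aux_cs4 (Finset.univ.erase j0) d
    rw [herase_sum, hcard] at this
    exact this
  have hS4split : S4 = M ^ 4 + T := by
    have hsub : T = S4 - d j0 ^ 4 := Finset.sum_erase_eq_sub hj0mem
    have h4 : M ^ 4 = d j0 ^ 4 := by rw [hM_def]; ring
    rw [h4]; linarith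
  -- final combination
  have hdenpos : (0 : ℝ) < (n : ℝ) ^ 3 * ((n : ℝ) - 1) ^ 3 := by
    have h1 : (0 : ℝ) < (n : ℝ) - 1 := by linarith
    have h2 : (0 : ℝ) < (n : ℝ) := by linarith
    positivity
  have hDpos : (0 : ℝ) < (n : ℝ) ^ 2 - 3 * n + 3 := by nlinarith
  rw [div_mul_eq_mul_div, div_le_iff₀ hdenpos]
  have key1 : S2 ^ 4 ≤ (n : ℝ) ^ 4 * m ^ 4 * M ^ 4 := by
    calc S2 ^ 4 ≤ ((n : ℝ) * m * M) ^ 4 := pow_le_pow_left₀ hS2nn hS2 4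
      _ = (n : ℝ) ^ 4 * m ^ 4 * M ^ 4 := by ring
  have key2 : (n : ℝ) * ((n : ℝ) ^ 2 - 3 * n + 3) * M ^ 4 ≤ ((n : ℝ) - 1) ^ 3 * S4 := by
    rw [hS4split]
    nlinarith [hHolder]
  calc ((n : ℝ) ^ 2 - 3 * n + 3) * S2 ^ 4
      ≤ ((n : ℝ) ^ 2 - 3 * n + 3) * ((n : ℝ) ^ 4 * m ^ 4 * M ^ 4) :=
        mul_le_mul_of_nonneg_left key1 hDpos.le
    _ = ((n : ℝ) ^ 3 * m ^ 4) * ((n : ℝ) * ((n : ℝ) ^ 2 - 3 * n + 3) * M ^ 4) := by ring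
    _ ≤ ((n : ℝ) ^ 3 * m ^ 4) * (((n : ℝ) - 1) ^ 3 * S4) := by
        apply mul_le_mul_of_nonneg_left key2
        positivity
    _ = m ^ 4 * S4 * ((n : ℝ) ^ 3 * ((n : ℝ) - 1) ^ 3) := by ring

private lemma aux_quarter {C S2 S4 m : ℝ} (hC : 0 ≤ C) (hS2 : 0 ≤ S2) (hS4 : 0 < S4)
    (hm : 0 ≤ m) (h : C * S2 ^ 4 ≤ m ^ 4 * S4) :
    C ^ ((1 : ℝ) / 4) * S2 / S4 ^ ((1 : ℝ) / 4) ≤ m := by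
  rw [div_le_iff₀ (Real.rpow_pos_of_pos hS4 _)]
  have e1 : (C ^ ((1 : ℝ) / 4)) ^ (4 : ℕ) = C := by
    rw [← Real.rpow_natCast (C ^ ((1 : ℝ) / 4)) 4, ← Real.rpow_mul hC]
    norm_num
  have e2 : (S4 ^ ((1 : ℝ) / 4)) ^ (4 : ℕ) = S4 := by
    rw [← Real.rpow_natCast (S4 ^ ((1 : ℝ) / 4)) 4, ← Real.rpow_mul hS4.le]
    norm_num
  have h1 : (C ^ ((1 : ℝ) / 4) * S2) ^ (4 : ℕ) ≤ (m * S4 ^ ((1 : ℝ) / 4)) ^ (4 : ℕ) := by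
    rw [mul_pow, mul_pow, e1, e2]
    exact h
  exact le_of_pow_le_pow_left₀ (by norm_num)
    (mul_nonneg hm (Real.rpow_nonneg hS4.le _)) h1

theorem stmt_17 (n : ℕ) (hn : 2 ≤ n) (A : Matrix (Fin n) (Fin n) ℂ)
    (hA : A.IsHermitian)
    (B : Matrix (Fin n) (Fin n) ℂ)
    (hB : B = A - (A.trace / n) • 1)
    (hB0 : B ≠ 0) :
    (Finset.univ.inf' (Finset.univ_nonempty_iff.mpr (Fin.pos_iff_nonempty.mp (by omega)))
        hA.eigenvalues ≤
      A.trace.re / n - (((n : ℝ) ^ 2 - 3 * n + 3) / ((n : ℝ) ^ 3 * ((n : ℝ) - 1) ^ 3)) ^ ((1 : ℝ) / 4)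
        * (B ^ 2).trace.re / ((B ^ 4).trace.re ^ ((1 : ℝ) / 4))) ∧
    (Finset.univ.sup' (Finset.univ_nonempty_iff.mpr (Fin.pos_iff_nonempty.mp (by omega)))
        hA.eigenvalues ≥
      A.trace.re / n + (((n : ℝ) ^ 2 - 3 * n + 3) / ((n : ℝ) ^ 3 * ((n : ℝ) - 1) ^ 3)) ^ ((1 : ℝ) / 4)
        * (B ^ 2).trace.re / ((B ^ 4).trace.re ^ ((1 : ℝ) / 4))) := by
  classical
  set V : Matrix (Fin n) (Fin n) ℂ := (hA.eigenvectorUnitary : Matrix (Fin n) (Fin n) ℂ) with hVdef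
  have hV1 : V * star V = 1 := Matrix.mem_unitaryGroup_iff.mp hA.eigenvectorUnitary.2
  have hV2 : star V * V = 1 := Matrix.mem_unitaryGroup_iff'.mp hA.eigenvectorUnitary.2
  have spec : A = V * Matrix.diagonal (RCLike.ofReal ∘ hA.eigenvalues) * star V :=
    hA.spectral_theorem
  have hNne : ((n : ℂ)) ≠ 0 := by
    have : 0 < n := by omega
    exact_mod_cast Nat.cast_ne_zero.mpr (by omega)
  have hNRne : ((n : ℝ)) ≠ 0 := by
    exact_mod_cast Nat.cast_ne_zero.mpr (show n ≠ 0 by omega)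
  have htrace : A.trace = ((∑ i, hA.eigenvalues i : ℝ) : ℂ) := by
    conv_lhs => rw [spec]
    rw [Matrix.trace_mul_comm, ← Matrix.mul_assoc, hV2, Matrix.one_mul, Matrix.trace_diagonal]
    push_cast
    rfl
  set t : ℝ := (∑ i, hA.eigenvalues i) / n with ht_def
  have htre : A.trace.re = ∑ i, hA.eigenvalues i := by rw [htrace]; simp
  have hc : A.trace / n = ((t : ℝ) : ℂ) := by
    rw [htrace, ht_def]
    push_cast
    ring
  set d : Fin n → ℝ := fun i => hA.eigenvalues i - t with hd_def
  have hBdiag : B = V * Matrix.diagonal (fun i => ((d i : ℝ) : ℂ)) * star V := by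
    rw [hB, hc]
    conv_lhs => rw [spec]
    have h1 : ((t : ℝ) : ℂ) • (1 : Matrix (Fin n) (Fin n) ℂ)
        = V * (((t : ℝ) : ℂ) • (1 : Matrix (Fin n) (Fin n) ℂ)) * star V := by
      rw [Matrix.mul_smul, Matrix.smul_mul, Matrix.mul_one, hV1]
    rw [h1, ← Matrix.sub_mul, ← Matrix.mul_sub]
    congr 1
    congr 1
    rw [Matrix.smul_one_eq_diagonal, Matrix.diagonal_sub]
    congr 1
    funext i
    simp [hd_def]
  have hpow : ∀ k : ℕ, (B ^ k).trace = ((∑ i, (d i) ^ k : ℝ) : ℂ) := by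
    intro k
    have hBk : B ^ k = V * (Matrix.diagonal (fun i => ((d i : ℝ) : ℂ))) ^ k * star V := by
      induction k with
      | zero => rw [pow_zero, pow_zero, Matrix.mul_one, hV1]
      | succ k ih =>
        have hcancel : ∀ X : Matrix (Fin n) (Fin n) ℂ, star V * (V * X) = X := by
          intro X; rw [← Matrix.mul_assoc, hV2, Matrix.one_mul]
        rw [pow_succ, ih, pow_succ, hBdiag]
        simp only [Matrix.mul_assoc, hcancel]
    rw [hBk, Matrix.trace_mul_comm, ← Matrix.mul_assoc, hV2, Matrix.one_mul,
      Matrix.diagonal_pow, Matrix.trace_diagonal]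
    push_cast
    rfl
  have h2t : (B ^ 2).trace.re = ∑ i, (d i) ^ 2 := by
    rw [hpow 2]; exact Complex.ofReal_re _
  have h4t : (B ^ 4).trace.re = ∑ i, (d i) ^ 4 := by
    rw [hpow 4]; exact Complex.ofReal_re _
  have hsum : ∑ i, d i = 0 := by
    simp only [hd_def]
    rw [Finset.sum_sub_distrib, Finset.sum_const, Finset.card_univ, Fintype.card_fin,
      nsmul_eq_mul, ht_def]
    field_simp
    ring
  have hdne : ∃ i, d i ≠ 0 := by
    by_contra h
    push_neg at h
    apply hB0
    rw [hBdiag]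
    have hz : (fun i => ((d i : ℝ) : ℂ)) = fun _ => (0 : ℂ) := by
      funext i; rw [h i]; simp
    rw [hz]
    simp
  obtain ⟨k, hk⟩ := hdne
  set S2 : ℝ := ∑ i, (d i) ^ 2 with hS2_def
  set S4 : ℝ := ∑ i, (d i) ^ 4 with hS4_def
  have hS4pos : 0 < S4 := by
    have h1 : (0 : ℝ) < (d k) ^ 4 := by positivity
    exact lt_of_lt_of_le h1
      (Finset.single_le_sum (f := fun i => (d i) ^ 4) (fun i _ => by positivity)
        (Finset.mem_univ k))
  have hS2nn : 0 ≤ S2 := Finset.sum_nonneg fun i _ => by positivity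
  set C : ℝ := ((n : ℝ) ^ 2 - 3 * n + 3) / ((n : ℝ) ^ 3 * ((n : ℝ) - 1) ^ 3) with hC_def
  have hN : (2 : ℝ) ≤ (n : ℝ) := by exact_mod_cast hn
  have hCnn : 0 ≤ C := by
    apply div_nonneg
    · nlinarith
    · have h1 : (0 : ℝ) < (n : ℝ) - 1 := by linarith
      have h2 : (0 : ℝ) < (n : ℝ) := by linarith
      positivity
  obtain ⟨i0, -, hi0⟩ := Finset.exists_max_image Finset.univ d ⟨k, Finset.mem_univ k⟩
  obtain ⟨j0, -, hj0⟩ := Finset.exists_min_image Finset.univ d ⟨k, Finset.mem_univ k⟩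
  have hi0' : ∀ i, d i ≤ d i0 := fun i => hi0 i (Finset.mem_univ i)
  have hj0' : ∀ i, d j0 ≤ d i := fun i => hj0 i (Finset.mem_univ i)
  have hm_nn : 0 ≤ d i0 := by
    by_contra h
    push_neg at h
    have : ∑ i, d i < 0 := by
      have : ∀ i ∈ Finset.univ, d i ≤ d i0 := fun i _ => hi0' i
      calc ∑ i, d i ≤ ∑ _i : Fin n, d i0 := Finset.sum_le_sum this
        _ = n * d i0 := by rw [Finset.sum_const, Finset.card_univ, Fintype.card_fin, nsmul_eq_mul]
        _ < 0 := by
            apply mul_neg_of_pos_of_neg _ h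
            linarith
    linarith [hsum]
  have hM_nn : 0 ≤ -d j0 := by
    by_contra h
    push_neg at h
    have : 0 < ∑ i, d i := by
      have hlt : 0 < d j0 := by linarith
      have : ∀ i ∈ Finset.univ, d j0 ≤ d i := fun i _ => hj0' i
      calc (0 : ℝ) < n * d j0 := by
            apply mul_pos _ hlt
            linarith
        _ = ∑ _i : Fin n, d j0 := by
            rw [Finset.sum_const, Finset.card_univ, Fintype.card_fin, nsmul_eq_mul]
        _ ≤ ∑ i, d i := Finset.sum_le_sum this
    linarith [hsum]
  have hmain1 := aux_core hn d hsum ⟨k, hk⟩ i0 hi0'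
  have hmain2 : C * S2 ^ 4 ≤ (-d j0) ^ 4 * S4 := by
    have hsum' : ∑ i, (fun i => -d i) i = 0 := by
      simp only
      rw [Finset.sum_neg_distrib, hsum, neg_zero]
    have hne' : ∃ i, (fun i => -d i) i ≠ 0 := ⟨k, by simpa using hk⟩
    have hmax' : ∀ i, (fun i => -d i) i ≤ (fun i => -d i) j0 := fun i => by
      simp only [neg_le_neg_iff]
      exact hj0' i
    have h : ((n : ℝ) ^ 2 - 3 * n + 3) / ((n : ℝ) ^ 3 * ((n : ℝ) - 1) ^ 3)
        * (∑ i, (-d i) ^ 2) ^ 4 ≤ (-d j0) ^ 4 * ∑ i, (-d i) ^ 4 :=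
      aux_core hn (fun i => -d i) hsum' hne' j0 hmax'
    have e2 : ∑ i, (-d i) ^ 2 = S2 := by
      rw [hS2_def]; apply Finset.sum_congr rfl; intros; ring
    have e4 : ∑ i, (-d i) ^ 4 = S4 := by
      rw [hS4_def]; apply Finset.sum_congr rfl; intros; ring
    rw [e2, e4] at h
    exact h
  have hmain1' : C * S2 ^ 4 ≤ (d i0) ^ 4 * S4 := hmain1
  have hq1 : C ^ ((1 : ℝ) / 4) * S2 / S4 ^ ((1 : ℝ) / 4) ≤ d i0 :=
    aux_quarter hCnn hS2nn hS4pos hm_nn hmain1'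
  have hq2 : C ^ ((1 : ℝ) / 4) * S2 / S4 ^ ((1 : ℝ) / 4) ≤ -d j0 :=
    aux_quarter hCnn hS2nn hS4pos hM_nn hmain2
  have htA : A.trace.re / n = t := by rw [htre, ht_def]
  have hlam_i0 : hA.eigenvalues i0 = t + d i0 := by simp [hd_def]
  have hlam_j0 : hA.eigenvalues j0 = t + d j0 := by simp [hd_def]
  constructor
  · have hle : Finset.univ.inf'
        (Finset.univ_nonempty_iff.mpr (Fin.pos_iff_nonempty.mp (by omega)))
        hA.eigenvalues ≤ hA.eigenvalues j0 := Finset.inf'_le _ (Finset.mem_univ j0)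
    rw [htA, h2t, h4t]
    rw [hlam_j0] at hle
    linarith
  · have hge : hA.eigenvalues i0 ≤ Finset.univ.sup'
        (Finset.univ_nonempty_iff.mpr (Fin.pos_iff_nonempty.mp (by omega)))
        hA.eigenvalues := Finset.le_sup' _ (Finset.mem_univ i0)
    rw [ge_iff_le, htA, h2t, h4t]
    rw [hlam_i0] at hge
    linarith
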